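/- Let d ≥ 1 and let G be a non-complete d-regular finite simple graph of order n ≥ d³ − 2d² + 2d + 2. Then G is meagre, i.e., gp(μ(G)) = max{n, 2·α_gp(G)}. -/

import Mathlib

open SimpleGraph

variable {V : Type*}

/-- The Mycielskian of a graph `G`: vertices are `some (Sum.inl v)` (original vertices),
`some (Sum.inr v)` (twin vertices), and `none` (the root `u*`). -/
def Mycielskian (G : SimpleGraph V) : SimpleGraph (Option (V ⊕ V)) :=
  SimpleGraph.fromRel (fun x y =>
    (∃ u v, G.Adj u v ∧ x = some (Sum.inl u) ∧ y = some (Sum.inl v)) ∨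
    (∃ u v, G.Adj u v ∧ x = some (Sum.inl u) ∧ y = some (Sum.inr v)) ∨
    (∃ u, x = some (Sum.inr u) ∧ y = none))

/-- `S` is a general position set: no shortest path between two vertices of `S`
contains a third element of `S`. -/
def IsGPSet (G : SimpleGraph V) (S : Set V) : Prop :=
  ∀ u ∈ S, ∀ v ∈ S, ∀ p : G.Walk u v, p.length = G.dist u v →
    ∀ w ∈ S, w ∈ p.support → w = u ∨ w = v

/-- The general position number of `G`: the maximum cardinality of a general position set. -/
noncomputable def gpNumber (G : SimpleGraph V) [Fintype V] : ℕ :=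
  sSup {k | ∃ S : Set V, IsGPSet G S ∧ S.ncard = k}

/-- A gp-set: a general position set of maximum cardinality. -/
def IsGpSet (G : SimpleGraph V) [Fintype V] (S : Set V) : Prop :=
  IsGPSet G S ∧ S.ncard = gpNumber G

/-- `G` is a `d`-regular graph: every vertex has degree `d`. -/
def IsRegularDeg (G : SimpleGraph V) (d : ℕ) : Prop :=
  ∀ v : V, (G.neighborSet v).ncard = d

/-- The maximum cardinality of a set of vertices of `G` that is simultaneously an
independent set and a general position set of `G`. -/
noncomputable def alphaGpNumber (G : SimpleGraph V) [Fintype V] : ℕ :=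
  sSup {k | ∃ S : Set V, (∀ u ∈ S, ∀ v ∈ S, ¬ G.Adj u v) ∧ IsGPSet G S ∧ S.ncard = k}

namespace Mey

open SimpleGraph Sum

variable {V : Type*} {G : SimpleGraph V}

/-- original vertex -/
abbrev vl (v : V) : Option (V ⊕ V) := some (Sum.inl v)
/-- twin vertex -/
abbrev vr (v : V) : Option (V ⊕ V) := some (Sum.inr v)

@[simp] lemma adj_ll {u v : V} : (Mycielskian G).Adj (vl u) (vl v) ↔ G.Adj u v := by
  constructor
  · rintro ⟨hne, h | h⟩ <;>
      rcases h with ⟨a, b, hab, h1, h2⟩ | ⟨a, b, hab, h1, h2⟩ | ⟨a, h1, h2⟩ <;>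
      (try simp_all) <;> (try exact hab.symm)
  · intro h
    exact ⟨by simp [h.ne], Or.inl (Or.inl ⟨u, v, h, rfl, rfl⟩)⟩

@[simp] lemma adj_lr {u v : V} : (Mycielskian G).Adj (vl u) (vr v) ↔ G.Adj u v := by
  constructor
  · rintro ⟨hne, h | h⟩ <;>
      rcases h with ⟨a, b, hab, h1, h2⟩ | ⟨a, b, hab, h1, h2⟩ | ⟨a, h1, h2⟩ <;>
      (try simp_all) <;> (try exact hab.symm)
  · intro h
    exact ⟨by simp, Or.inl (Or.inr (Or.inl ⟨u, v, h, rfl, rfl⟩))⟩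

@[simp] lemma adj_rl {u v : V} : (Mycielskian G).Adj (vr u) (vl v) ↔ G.Adj v u := by
  rw [SimpleGraph.adj_comm]; exact adj_lr

@[simp] lemma not_adj_rr {u v : V} : ¬ (Mycielskian G).Adj (vr u) (vr v) := by
  rintro ⟨hne, h | h⟩ <;>
    rcases h with ⟨a, b, hab, h1, h2⟩ | ⟨a, b, hab, h1, h2⟩ | ⟨a, h1, h2⟩ <;> simp_all

@[simp] lemma adj_r_root {u : V} : (Mycielskian G).Adj (vr u) none := by
  exact ⟨by simp, Or.inl (Or.inr (Or.inr ⟨u, rfl, rfl⟩))⟩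

@[simp] lemma adj_root_r {u : V} : (Mycielskian G).Adj none (vr u) :=
  adj_r_root.symm

@[simp] lemma not_adj_l_root {u : V} : ¬ (Mycielskian G).Adj (vl u) none := by
  rintro ⟨hne, h | h⟩ <;>
    rcases h with ⟨a, b, hab, h1, h2⟩ | ⟨a, b, hab, h1, h2⟩ | ⟨a, h1, h2⟩ <;> simp_all

@[simp] lemma not_adj_root_l {u : V} : ¬ (Mycielskian G).Adj none (vl u) := fun h =>
  not_adj_l_root h.symm

end Mey


namespace Mey
open SimpleGraph Sum

variable {V : Type*} {G : SimpleGraph V}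

section WalkDestruct
variable {W : Type*} {H : SimpleGraph W}

lemma walk_len1 {x y : W} (p : H.Walk x y) (h : p.length = 1) :
    H.Adj x y ∧ p.support = [x, y] := by
  cases p with
  | nil => simp at h
  | cons h1 q =>
    cases q with
    | nil => exact ⟨h1, by simp⟩
    | cons h2 r => simp [SimpleGraph.Walk.length_cons] at h

lemma walk_len2 {x y : W} (p : H.Walk x y) (h : p.length = 2) :
    ∃ a, H.Adj x a ∧ H.Adj a y ∧ p.support = [x, a, y] := by
  cases p with
  | nil => simp at h
  | cons h1 q =>
    have hq : q.length = 1 := by simpa using h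
    obtain ⟨h2, hs⟩ := walk_len1 q hq
    exact ⟨_, h1, h2, by simp [hs]⟩

lemma walk_len3 {x y : W} (p : H.Walk x y) (h : p.length = 3) :
    ∃ a b, H.Adj x a ∧ H.Adj a b ∧ H.Adj b y ∧ p.support = [x, a, b, y] := by
  cases p with
  | nil => simp at h
  | cons h1 q =>
    have hq : q.length = 2 := by simpa using h
    obtain ⟨a, h2, h3, hs⟩ := walk_len2 q hq
    exact ⟨_, a, h1, h2, h3, by simp [hs]⟩

lemma walk_len4 {x y : W} (p : H.Walk x y) (h : p.length = 4) :
    ∃ a b c, H.Adj x a ∧ H.Adj a b ∧ H.Adj b c ∧ H.Adj c y ∧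
      p.support = [x, a, b, c, y] := by
  cases p with
  | nil => simp at h
  | cons h1 q =>
    have hq : q.length = 3 := by simpa using h
    obtain ⟨a, b, h2, h3, h4, hs⟩ := walk_len3 q hq
    exact ⟨_, a, b, h1, h2, h3, h4, by simp [hs]⟩

/-- two-step walk -/
def w2 {x a y : W} (h1 : H.Adj x a) (h2 : H.Adj a y) : H.Walk x y :=
  Walk.cons h1 (Walk.cons h2 Walk.nil)

@[simp] lemma w2_length {x a y : W} (h1 : H.Adj x a) (h2 : H.Adj a y) :
    (w2 h1 h2).length = 2 := by simp [w2]

@[simp] lemma w2_support {x a y : W} (h1 : H.Adj x a) (h2 : H.Adj a y) :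
    (w2 h1 h2).support = [x, a, y] := by simp [w2]

def w3 {x a b y : W} (h1 : H.Adj x a) (h2 : H.Adj a b) (h3 : H.Adj b y) : H.Walk x y :=
  Walk.cons h1 (Walk.cons h2 (Walk.cons h3 Walk.nil))

@[simp] lemma w3_length {x a b y : W} (h1 : H.Adj x a) (h2 : H.Adj a b) (h3 : H.Adj b y) :
    (w3 h1 h2 h3).length = 3 := by simp [w3]

@[simp] lemma w3_support {x a b y : W} (h1 : H.Adj x a) (h2 : H.Adj a b) (h3 : H.Adj b y) :
    (w3 h1 h2 h3).support = [x, a, b, y] := by simp [w3]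

def w4 {x a b c y : W} (h1 : H.Adj x a) (h2 : H.Adj a b) (h3 : H.Adj b c) (h4 : H.Adj c y) :
    H.Walk x y :=
  Walk.cons h1 (Walk.cons h2 (Walk.cons h3 (Walk.cons h4 Walk.nil)))

@[simp] lemma w4_length {x a b c y : W} (h1 : H.Adj x a) (h2 : H.Adj a b) (h3 : H.Adj b c)
    (h4 : H.Adj c y) : (w4 h1 h2 h3 h4).length = 4 := by simp [w4]

@[simp] lemma w4_support {x a b c y : W} (h1 : H.Adj x a) (h2 : H.Adj a b) (h3 : H.Adj b c)
    (h4 : H.Adj c y) : (w4 h1 h2 h3 h4).support = [x, a, b, c, y] := by simp [w4]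

lemma dist_eq_two {x y : W} (hne : x ≠ y) (hna : ¬ H.Adj x y)
    {a : W} (h1 : H.Adj x a) (h2 : H.Adj a y) : H.dist x y = 2 := by
  have hle : H.dist x y ≤ 2 := by
    have := SimpleGraph.dist_le (w2 h1 h2); simpa using this
  have hr : H.Reachable x y := ⟨w2 h1 h2⟩
  have h0 : H.dist x y ≠ 0 := by
    intro hh
    rcases SimpleGraph.dist_eq_zero_iff_eq_or_not_reachable.mp hh with h | h
    exacts [hne h, h hr]
  have h1' : H.dist x y ≠ 1 := by
    intro hh
    obtain ⟨p, hp⟩ := hr.exists_walk_length_eq_dist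
    rw [hh] at hp
    exact hna (walk_len1 p hp).1
  omega

lemma dist_eq_three {x y : W} (hne : x ≠ y) (hna : ¬ H.Adj x y)
    (hmid : ∀ a, ¬ (H.Adj x a ∧ H.Adj a y))
    {a b : W} (h1 : H.Adj x a) (h2 : H.Adj a b) (h3 : H.Adj b y) : H.dist x y = 3 := by
  have hle : H.dist x y ≤ 3 := by
    have := SimpleGraph.dist_le (w3 h1 h2 h3); simpa using this
  have hr : H.Reachable x y := ⟨w3 h1 h2 h3⟩
  have h0 : H.dist x y ≠ 0 := by
    intro hh
    rcases SimpleGraph.dist_eq_zero_iff_eq_or_not_reachable.mp hh with h | h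
    exacts [hne h, h hr]
  have hh1 : H.dist x y ≠ 1 := by
    intro hh
    obtain ⟨p, hp⟩ := hr.exists_walk_length_eq_dist
    rw [hh] at hp
    exact hna (walk_len1 p hp).1
  have hh2 : H.dist x y ≠ 2 := by
    intro hh
    obtain ⟨p, hp⟩ := hr.exists_walk_length_eq_dist
    rw [hh] at hp
    obtain ⟨c, hc1, hc2, -⟩ := walk_len2 p hp
    exact hmid c ⟨hc1, hc2⟩
  omega

lemma dist_eq_four {x y : W} (hne : x ≠ y) (hna : ¬ H.Adj x y)
    (hmid : ∀ a, ¬ (H.Adj x a ∧ H.Adj a y))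
    (hmid3 : ∀ a b, ¬ (H.Adj x a ∧ H.Adj a b ∧ H.Adj b y))
    {a b c : W} (h1 : H.Adj x a) (h2 : H.Adj a b) (h3 : H.Adj b c) (h4 : H.Adj c y) :
    H.dist x y = 4 := by
  have hle : H.dist x y ≤ 4 := by
    have := SimpleGraph.dist_le (w4 h1 h2 h3 h4); simpa using this
  have hr : H.Reachable x y := ⟨w4 h1 h2 h3 h4⟩
  have h0 : H.dist x y ≠ 0 := by
    intro hh
    rcases SimpleGraph.dist_eq_zero_iff_eq_or_not_reachable.mp hh with h | h
    exacts [hne h, h hr]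
  have hh1 : H.dist x y ≠ 1 := by
    intro hh
    obtain ⟨p, hp⟩ := hr.exists_walk_length_eq_dist
    rw [hh] at hp
    exact hna (walk_len1 p hp).1
  have hh2 : H.dist x y ≠ 2 := by
    intro hh
    obtain ⟨p, hp⟩ := hr.exists_walk_length_eq_dist
    rw [hh] at hp
    obtain ⟨c', hc1, hc2, -⟩ := walk_len2 p hp
    exact hmid c' ⟨hc1, hc2⟩
  have hh3 : H.dist x y ≠ 3 := by
    intro hh
    obtain ⟨p, hp⟩ := hr.exists_walk_length_eq_dist
    rw [hh] at hp
    obtain ⟨a', b', hc1, hc2, hc3, -⟩ := walk_len3 p hp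
    exact hmid3 a' b' ⟨hc1, hc2, hc3⟩
  omega

end WalkDestruct
end Mey


namespace Mey
open SimpleGraph Sum

variable {V : Type*} {G : SimpleGraph V} {d : ℕ}

lemma nbr_exists (hreg : IsRegularDeg G d) (hd : 1 ≤ d) (v : V) : ∃ w, G.Adj v w := by
  have h := hreg v
  have : (G.neighborSet v).Nonempty := by
    apply Set.nonempty_of_ncard_ne_zero; omega
  obtain ⟨w, hw⟩ := this
  exact ⟨w, hw⟩

section Dist
variable (hreg : IsRegularDeg G d) (hd : 1 ≤ d)

lemma dist_rr {x y : V} (hne : x ≠ y) :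
    (Mycielskian G).dist (vr x) (vr y) = 2 :=
  dist_eq_two (by simp [hne]) not_adj_rr adj_r_root adj_root_r

include hreg hd in
lemma dist_l_root (x : V) : (Mycielskian G).dist (vl x) none = 2 := by
  obtain ⟨w, hw⟩ := nbr_exists hreg hd x
  exact dist_eq_two (by simp) not_adj_l_root (adj_lr.mpr hw) adj_r_root

include hreg hd in
lemma dist_lr_self (x : V) : (Mycielskian G).dist (vl x) (vr x) = 2 := by
  obtain ⟨w, hw⟩ := nbr_exists hreg hd x
  exact dist_eq_two (by simp) (by simp) (adj_ll.mpr hw) (adj_lr.mpr hw.symm)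

lemma dist_lr_two {x y : V} (hne : x ≠ y) (hna : ¬ G.Adj x y) {w : V}
    (h1 : G.Adj x w) (h2 : G.Adj w y) :
    (Mycielskian G).dist (vl x) (vr y) = 2 :=
  dist_eq_two (by simp) (by simp [hna]) (adj_ll.mpr h1) (adj_lr.mpr h2)

include hreg hd in
lemma dist_lr_three {x y : V} (hne : x ≠ y) (hna : ¬ G.Adj x y)
    (hcn : ∀ w, ¬ (G.Adj x w ∧ G.Adj w y)) :
    (Mycielskian G).dist (vl x) (vr y) = 3 := by
  obtain ⟨w, hw⟩ := nbr_exists hreg hd x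
  refine dist_eq_three (by simp) (by simp [hna]) ?_ (adj_lr.mpr hw) adj_r_root adj_root_r
  rintro (_ | a | a) ⟨ha1, ha2⟩
  · exact not_adj_l_root ha1
  · exact hcn a ⟨adj_ll.mp ha1, adj_lr.mp ha2⟩
  · exact not_adj_rr ha2

lemma dist_ll_two {x y : V} (hne : x ≠ y) (hna : ¬ G.Adj x y) {w : V}
    (h1 : G.Adj x w) (h2 : G.Adj w y) :
    (Mycielskian G).dist (vl x) (vl y) = 2 :=
  dist_eq_two (by simp [hne]) (by simp [hna]) (adj_ll.mpr h1) (adj_ll.mpr h2)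

lemma dist_ll_three {x y : V} (hne : x ≠ y) (hna : ¬ G.Adj x y)
    (hcn : ∀ w, ¬ (G.Adj x w ∧ G.Adj w y)) {a b : V}
    (h1 : G.Adj x a) (h2 : G.Adj a b) (h3 : G.Adj b y) :
    (Mycielskian G).dist (vl x) (vl y) = 3 := by
  refine dist_eq_three (by simp [hne]) (by simp [hna]) ?_
    (adj_ll.mpr h1) (adj_ll.mpr h2) (adj_ll.mpr h3)
  rintro (_ | c | c) ⟨hc1, hc2⟩
  · exact not_adj_l_root hc1
  · exact hcn c ⟨adj_ll.mp hc1, adj_ll.mp hc2⟩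
  · exact hcn c ⟨adj_lr.mp hc1, (adj_rl.mp hc2).symm⟩

include hreg hd in
lemma dist_ll_four {x y : V} (hne : x ≠ y) (hna : ¬ G.Adj x y)
    (hcn : ∀ w, ¬ (G.Adj x w ∧ G.Adj w y))
    (h3p : ∀ a b, ¬ (G.Adj x a ∧ G.Adj a b ∧ G.Adj b y)) :
    (Mycielskian G).dist (vl x) (vl y) = 4 := by
  obtain ⟨a, ha⟩ := nbr_exists hreg hd x
  obtain ⟨b, hb⟩ := nbr_exists hreg hd y
  refine dist_eq_four (by simp [hne]) (by simp [hna]) ?_ ?_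
    (adj_lr.mpr ha) adj_r_root adj_root_r (adj_rl.mpr hb)
  · rintro (_ | c | c) ⟨hc1, hc2⟩
    · exact not_adj_l_root hc1
    · exact hcn c ⟨adj_ll.mp hc1, adj_ll.mp hc2⟩
    · exact hcn c ⟨adj_lr.mp hc1, (adj_rl.mp hc2).symm⟩
  · rintro (_ | c | c) (_ | e | e) ⟨hc1, hc2, hc3⟩
    · exact not_adj_l_root hc1
    · exact not_adj_l_root hc1
    · exact not_adj_l_root hc1
    · exact not_adj_root_l hc3
    · exact h3p c e ⟨adj_ll.mp hc1, adj_ll.mp hc2, adj_ll.mp hc3⟩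
    · exact h3p c e ⟨adj_ll.mp hc1, adj_lr.mp hc2, (adj_rl.mp hc3).symm⟩
    · exact not_adj_root_l hc3
    · exact h3p c e ⟨adj_lr.mp hc1, (adj_rl.mp hc2).symm, adj_ll.mp hc3⟩
    · exact not_adj_rr hc2

end Dist

/-- extract an exclusion from the general position property -/
lemma gp_excl {W : Type*} {H : SimpleGraph W} {S : Set W} (hS : IsGPSet H S)
    {x y : W} (hx : x ∈ S) (hy : y ∈ S) (p : H.Walk x y) (hp : p.length = H.dist x y)
    {z : W} (hzs : z ∈ p.support) (h1 : z ≠ x) (h2 : z ≠ y) : z ∉ S := fun hz => by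
  rcases hS x hx y hy p hp z hz hzs with h | h
  exacts [h1 h, h2 h]

end Mey


namespace Mey
open SimpleGraph Sum

variable {V : Type*} {G : SimpleGraph V} {d : ℕ}

lemma nbr_inter_bound [Fintype V] (hreg : IsRegularDeg G d) {y x : V} {T : Set V}
    (hx : G.Adj y x) (hxT : x ∉ T) : (G.neighborSet y ∩ T).ncard ≤ d - 1 := by
  have hsub : G.neighborSet y ∩ T ⊆ G.neighborSet y \ {x} := by
    rintro z ⟨hz1, hz2⟩
    exact ⟨hz1, by rintro rfl; exact hxT hz2⟩
  have hle := Set.ncard_le_ncard hsub (Set.toFinite _)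
  have hmem : x ∈ G.neighborSet y := hx
  have heq : (G.neighborSet y \ {x}).ncard = d - 1 := by
    rw [Set.ncard_diff_singleton_of_mem hmem, hreg y]
  omega

lemma double_count [Fintype V] (hreg : IsRegularDeg G d) (hd : 1 ≤ d)
    {K W : Set V} (h : ∀ t ∈ K, G.neighborSet t ⊆ W) : K.ncard ≤ W.ncard := by
  classical
  rw [Set.ncard_eq_toFinset_card', Set.ncard_eq_toFinset_card']
  have key := Finset.card_mul_le_card_mul (fun a b => G.Adj a b)
    (s := K.toFinset) (t := W.toFinset) (m := d) (n := d) ?_ ?_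
  · exact Nat.le_of_mul_le_mul_right key hd
  · intro a ha
    have hsub : (G.neighborSet a).toFinset ⊆
        W.toFinset.bipartiteAbove (fun a b => G.Adj a b) a := by
      intro z hz
      simp only [Set.mem_toFinset, SimpleGraph.mem_neighborSet] at hz
      rw [Finset.mem_bipartiteAbove]
      exact ⟨by simp only [Set.mem_toFinset]; exact h a (by simpa using ha) hz, hz⟩
    have := Finset.card_le_card hsub
    have hcard : (G.neighborSet a).toFinset.card = d := by
      rw [← Set.ncard_eq_toFinset_card', hreg a]
    omega
  · intro b hb
    have hsub : K.toFinset.bipartiteBelow (fun a b => G.Adj a b) b ⊆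
        (G.neighborSet b).toFinset := by
      intro z hz
      rw [Finset.mem_bipartiteBelow] at hz
      simp only [Set.mem_toFinset, SimpleGraph.mem_neighborSet]
      exact hz.2.symm
    have := Finset.card_le_card hsub
    have hcard : (G.neighborSet b).toFinset.card = d := by
      rw [← Set.ncard_eq_toFinset_card', hreg b]
    omega

lemma cover_bound [Fintype V] {Z Y : Set V} {c : ℕ}
    (h : ∀ z ∈ Z, ∃ y ∈ Y, G.Adj y z)
    (hc : ∀ y ∈ Y, ((G.neighborSet y) ∩ Z).ncard ≤ c) : Z.ncard ≤ Y.ncard * c := by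
  classical
  rw [Set.ncard_eq_toFinset_card', Set.ncard_eq_toFinset_card']
  have hsub : Z.toFinset ⊆ Y.toFinset.biUnion (fun y => (G.neighborSet y ∩ Z).toFinset) := by
    intro z hz
    rw [Set.mem_toFinset] at hz
    obtain ⟨y, hy, hadj⟩ := h z hz
    rw [Finset.mem_biUnion]
    exact ⟨y, by simpa using hy, by simp [hz, hadj]⟩
  calc Z.toFinset.card ≤ _ := Finset.card_le_card hsub
    _ ≤ ∑ y ∈ Y.toFinset, (G.neighborSet y ∩ Z).toFinset.card := Finset.card_biUnion_le
    _ ≤ ∑ y ∈ Y.toFinset, c := by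
        apply Finset.sum_le_sum
        intro y hy
        rw [← Set.ncard_eq_toFinset_card']
        exact hc y (by simpa using hy)
    _ = Y.toFinset.card * c := by rw [Finset.sum_const, smul_eq_mul]

end Mey


namespace Mey
open SimpleGraph Sum

variable {V : Type*} {G : SimpleGraph V} {d : ℕ}

/-- vertices at distance 2 from `t` (combinatorially) -/
def R2 (G : SimpleGraph V) (t : V) : Set V :=
  {y | y ≠ t ∧ ¬ G.Adj t y ∧ ∃ x, G.Adj t x ∧ G.Adj x y}

/-- vertices at distance 3 from `t` (combinatorially) -/
def R3 (G : SimpleGraph V) (t : V) : Set V :=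
  {z | z ≠ t ∧ ¬ G.Adj t z ∧ (∀ x, ¬ (G.Adj t x ∧ G.Adj x z)) ∧
    ∃ a b, G.Adj t a ∧ G.Adj a b ∧ G.Adj b z}

/-- vertices at distance ≥ 4 from `t` (combinatorially) -/
def RFar (G : SimpleGraph V) (t : V) : Set V :=
  {z | z ≠ t ∧ ¬ G.Adj t z ∧ (∀ x, ¬ (G.Adj t x ∧ G.Adj x z)) ∧
    ∀ a b, ¬ (G.Adj t a ∧ G.Adj a b ∧ G.Adj b z)}

lemma mem_parts (G : SimpleGraph V) (t z : V) :
    z = t ∨ G.Adj t z ∨ z ∈ R2 G t ∨ z ∈ R3 G t ∨ z ∈ RFar G t := by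
  by_cases h1 : z = t
  · exact Or.inl h1
  by_cases h2 : G.Adj t z
  · exact Or.inr (Or.inl h2)
  by_cases h3 : ∃ x, G.Adj t x ∧ G.Adj x z
  · obtain ⟨x, hx⟩ := h3
    exact Or.inr (Or.inr (Or.inl ⟨h1, h2, x, hx⟩))
  push_neg at h3
  by_cases h4 : ∃ a b, G.Adj t a ∧ G.Adj a b ∧ G.Adj b z
  · obtain ⟨a, b, ha⟩ := h4
    exact Or.inr (Or.inr (Or.inr (Or.inl ⟨h1, h2, fun x hx => h3 x hx.1 hx.2, a, b, ha⟩)))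
  · push_neg at h4
    exact Or.inr (Or.inr (Or.inr (Or.inr ⟨h1, h2, fun x hx => h3 x hx.1 hx.2,
      fun a b hab => h4 a b hab.1 hab.2.1 hab.2.2⟩)))

lemma R2_card [Fintype V] (hreg : IsRegularDeg G d) (t : V) :
    (R2 G t).ncard ≤ d * (d - 1) := by
  have h := cover_bound (G := G) (Z := R2 G t) (Y := G.neighborSet t) (c := d - 1)
    ?_ ?_
  · rwa [hreg t] at h
  · rintro z ⟨hz1, hz2, x, hx1, hx2⟩
    exact ⟨x, hx1, hx2⟩
  · intro y hy
    have hadj : G.Adj t y := hy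
    exact nbr_inter_bound hreg hadj.symm (fun h => h.1 rfl)

lemma R3_nbr {t z : V} (hz : z ∈ R3 G t) : ∃ y ∈ R2 G t, G.Adj y z := by
  obtain ⟨hne, hna, hcn, a, b, h1, h2, h3⟩ := hz
  refine ⟨b, ⟨?_, ?_, a, h1, h2⟩, h3⟩
  · rintro rfl; exact hna h3
  · intro h; exact hcn b ⟨h, h3⟩

lemma AR3_bound [Fintype V] (hreg : IsRegularDeg G d) {t : V} {A E : Set V}
    (hE : ∀ a ∈ A ∩ R3 G t, ∀ y ∈ R2 G t, G.Adj y a → y ∉ E) :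
    (A ∩ R3 G t).ncard ≤ (R2 G t \ E).ncard * (d - 1) := by
  apply cover_bound
  · intro z hz
    obtain ⟨y, hy, hadj⟩ := R3_nbr hz.2
    exact ⟨y, ⟨hy, hE z hz y hy hadj⟩, hadj⟩
  · rintro y ⟨hy, -⟩
    obtain ⟨hyne, hyna, x, hx1, hx2⟩ := hy
    refine nbr_inter_bound hreg hx2.symm ?_
    rintro ⟨-, -, hxna, -⟩
    exact hxna hx1

/-- the original-vertex part of a set of Mycielskian vertices -/
def pA (S : Set (Option (V ⊕ V))) : Set V := {v | vl v ∈ S}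
/-- the twin-vertex part of a set of Mycielskian vertices -/
def pB (S : Set (Option (V ⊕ V))) : Set V := {v | vr v ∈ S}

lemma S_decomp_no_root {S : Set (Option (V ⊕ V))} (h : none ∉ S) :
    S = vl '' (pA S) ∪ vr '' (pB S) := by
  ext z
  match z with
  | none => simp [h, pA, pB]
  | some (inl v) => simp [pA, pB]
  | some (inr v) => simp [pA, pB]

lemma S_decomp_root {S : Set (Option (V ⊕ V))} (h : none ∈ S) :
    S = vl '' (pA S) ∪ vr '' (pB S) ∪ {none} := by
  ext z
  match z with
  | none => simp [h, pA, pB]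
  | some (inl v) => simp [pA, pB]
  | some (inr v) => simp [pA, pB]

lemma vl_inj : Function.Injective (vl : V → Option (V ⊕ V)) := by
  intro a b h; simpa using h

lemma vr_inj : Function.Injective (vr : V → Option (V ⊕ V)) := by
  intro a b h; simpa using h

lemma disj_lr (X Y : Set V) : Disjoint (vl '' X) (vr '' Y) := by
  rw [Set.disjoint_left]
  rintro z ⟨a, -, rfl⟩ ⟨b, -, hb⟩
  simp at hb

lemma disj_root (X Y : Set V) : Disjoint (vl '' X ∪ vr '' Y) ({none} : Set (Option (V ⊕ V))) := by
  rw [Set.disjoint_left]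
  rintro z hz hz'
  rw [Set.mem_singleton_iff] at hz'
  subst hz'
  rcases hz with ⟨a, -, ha⟩ | ⟨a, -, ha⟩ <;> simp at ha

lemma ncard_no_root [Fintype V] {S : Set (Option (V ⊕ V))} (h : none ∉ S) :
    S.ncard = (pA S).ncard + (pB S).ncard := by
  conv_lhs => rw [S_decomp_no_root h]
  rw [Set.ncard_union_eq (disj_lr _ _) (Set.toFinite _) (Set.toFinite _),
    Set.ncard_image_of_injective _ vl_inj, Set.ncard_image_of_injective _ vr_inj]

lemma ncard_root [Fintype V] {S : Set (Option (V ⊕ V))} (h : none ∈ S) :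
    S.ncard = (pA S).ncard + (pB S).ncard + 1 := by
  conv_lhs => rw [S_decomp_root h]
  rw [Set.ncard_union_eq (disj_root _ _) (Set.toFinite _) (Set.toFinite _),
    Set.ncard_union_eq (disj_lr _ _) (Set.toFinite _) (Set.toFinite _),
    Set.ncard_image_of_injective _ vl_inj, Set.ncard_image_of_injective _ vr_inj,
    Set.ncard_singleton]

end Mey


namespace Mey
open SimpleGraph Sum

variable {V : Type*} {G : SimpleGraph V} {d : ℕ}

section Main
variable [Fintype V]

lemma three_le_ncard {s : Set V} {a b c : V} (hab : a ≠ b) (hac : a ≠ c) (hbc : b ≠ c)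
    (ha : a ∈ s) (hb : b ∈ s) (hc : c ∈ s) : 3 ≤ s.ncard := by
  have hsub : ({a, b, c} : Set V) ⊆ s := by
    rintro z (rfl | rfl | rfl) <;> assumption
  have h3 : ({a, b, c} : Set V).ncard = 3 := by
    rw [Set.ncard_insert_of_notMem (by simp [hab, hac]) (Set.toFinite _),
      Set.ncard_insert_of_notMem (by simp [hbc]) (Set.toFinite _), Set.ncard_singleton]
  calc 3 = ({a, b, c} : Set V).ncard := h3.symm
    _ ≤ s.ncard := Set.ncard_le_ncard hsub (Set.toFinite _)

lemma ncard_le_card (s : Set V) : s.ncard ≤ Fintype.card V := by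
  have := Set.ncard_le_ncard (Set.subset_univ s) (Set.toFinite _)
  simpa [Set.ncard_univ, Nat.card_eq_fintype_card] using this

variable (hreg : IsRegularDeg G d) (hd : 1 ≤ d)
  {S : Set (Option (V ⊕ V))} (hS : IsGPSet (Mycielskian G) S)

include hreg hd hS

/-- Case analysis when the root is in S. -/
lemma case_root (hn : (d : ℤ) ^ 3 - 2 * d ^ 2 + 2 * d + 2 ≤ (Fintype.card V : ℤ))
    (hroot : none ∈ S) : S.ncard ≤ Fintype.card V := by
  set M := Mycielskian G with hM
  have hn3 : 3 ≤ Fintype.card V := by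
    have hd' : (1:ℤ) ≤ (d:ℤ) := by exact_mod_cast hd
    have : (3 : ℤ) ≤ (Fintype.card V : ℤ) := by
      nlinarith [hn, mul_nonneg (by linarith : (0:ℤ) ≤ (d:ℤ)) (sq_nonneg ((d:ℤ) - 1))]
    exact_mod_cast this
  -- B is a subsingleton
  have hBsub : (pB S).Subsingleton := by
    intro x hx y hy
    by_contra hne
    have hdist : M.dist (vr x) (vr y) = 2 := dist_rr hne
    have hp : (w2 (adj_r_root (G := G) (u := x)) (adj_root_r (u := y))).length
        = M.dist (vr x) (vr y) := by rw [hdist]; simp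
    exact gp_excl hS hx hy _ hp (by simp) (by simp) (by simp) hroot
  rcases hBsub.eq_empty_or_singleton with hB | ⟨v, hB⟩
  · -- B = ∅
    rcases Set.eq_empty_or_nonempty (pA S) with hA | ⟨a₀, ha₀⟩
    · rw [ncard_root hroot, hA, hB]
      simp only [Set.ncard_empty]
      omega
    -- A has no vertex "far" from a₀
    have hfar : ∀ a ∈ pA S, a ∉ RFar G a₀ := by
      rintro a ha ⟨hne, hna, hcn, h3p⟩
      obtain ⟨x, hx⟩ := nbr_exists hreg hd a₀
      obtain ⟨y, hy⟩ := nbr_exists hreg hd a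
      have hdist : M.dist (vl a₀) (vl a) = 4 :=
        dist_ll_four hreg hd (Ne.symm hne) hna (fun w hw => hcn w ⟨hw.1, hw.2⟩)
          (fun p q hpq => h3p p q ⟨hpq.1, hpq.2.1, hpq.2.2⟩)
      have hp : (w4 (adj_lr.mpr hx) (adj_r_root (u := x)) (adj_root_r (u := y))
          (adj_rl.mpr hy)).length = M.dist (vl a₀) (vl a) := by rw [hdist]; simp
      exact gp_excl hS ha₀ ha _ hp (by simp) (by simp) (by simp) hroot
    -- distance-3 vertices have their R2-neighbours outside A
    have hE : ∀ a ∈ pA S ∩ R3 G a₀, ∀ y ∈ R2 G a₀, G.Adj y a → y ∉ pA S := by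
      rintro a ⟨haA, haR3⟩ y ⟨hyne, hyna, x, hx1, hx2⟩ hya hyA
      obtain ⟨hane, hana, hacn, -⟩ := haR3
      have hdist : M.dist (vl a₀) (vl a) = 3 :=
        dist_ll_three (Ne.symm hane) hana (fun w hw => hacn w ⟨hw.1, hw.2⟩)
          hx1 hx2 hya
      have hp : (w3 (adj_ll.mpr hx1) (adj_ll.mpr hx2) (adj_ll.mpr hya)).length
          = M.dist (vl a₀) (vl a) := by rw [hdist]; simp
      exact gp_excl hS ha₀ haA _ hp (by simp)
        (by simp [hyne]) (by simp [hya.ne]) (hyA : vl y ∈ S)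
    have hr3 := AR3_bound hreg (t := a₀) (A := pA S) (E := pA S) hE
    -- A is within distance 3 of a₀
    have hAsub : pA S ⊆ {a₀} ∪ G.neighborSet a₀ ∪ (pA S ∩ R2 G a₀) ∪ (pA S ∩ R3 G a₀) := by
      intro a ha
      rcases mem_parts G a₀ a with h | h | h | h | h
      · exact Or.inl (Or.inl (Or.inl h))
      · exact Or.inl (Or.inl (Or.inr h))
      · exact Or.inl (Or.inr ⟨ha, h⟩)
      · exact Or.inr ⟨ha, h⟩
      · exact absurd h (hfar a ha)
    have hcard : (pA S).ncard ≤ 1 + d + (pA S ∩ R2 G a₀).ncard + (pA S ∩ R3 G a₀).ncard := by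
      calc (pA S).ncard ≤ _ := Set.ncard_le_ncard hAsub (Set.toFinite _)
        _ ≤ ({a₀} ∪ G.neighborSet a₀ ∪ (pA S ∩ R2 G a₀)).ncard
            + (pA S ∩ R3 G a₀).ncard := Set.ncard_union_le _ _
        _ ≤ (({a₀} : Set V) ∪ G.neighborSet a₀).ncard + (pA S ∩ R2 G a₀).ncard
            + (pA S ∩ R3 G a₀).ncard := by
              have := Set.ncard_union_le (({a₀} : Set V) ∪ G.neighborSet a₀) (pA S ∩ R2 G a₀)
              omega
        _ ≤ 1 + d + (pA S ∩ R2 G a₀).ncard + (pA S ∩ R3 G a₀).ncard := by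
              have h1 := Set.ncard_union_le ({a₀} : Set V) (G.neighborSet a₀)
              rw [Set.ncard_singleton, hreg a₀] at h1
              omega
    -- split R2 into the part inside A and outside
    have hsplit : (R2 G a₀ ∩ pA S).ncard + (R2 G a₀ \ pA S).ncard = (R2 G a₀).ncard :=
      Set.ncard_inter_add_ncard_diff_eq_ncard _ _ (Set.toFinite _)
    have hR2 := R2_card hreg a₀
    have hAR2 : (pA S ∩ R2 G a₀).ncard = (R2 G a₀ ∩ pA S).ncard := by rw [Set.inter_comm]
    -- final arithmetic
    rw [ncard_root hroot, hB, Set.ncard_empty]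
    set q := (R2 G a₀ ∩ pA S).ncard
    set P := (R2 G a₀ \ pA S).ncard
    set r := (pA S ∩ R3 G a₀).ncard
    rcases Nat.lt_or_ge d 2 with hd2 | hd2
    · -- d = 1
      have hd1 : d = 1 := by omega
      subst hd1
      have hR2' : (R2 G a₀).ncard = 0 := by simpa using hR2
      have hr3' : r = 0 := by simpa using hr3
      omega
    · -- d ≥ 2 : integer arithmetic
      have hq : (q : ℤ) + P = (R2 G a₀).ncard := by exact_mod_cast hsplit
      have hR2' : ((R2 G a₀).ncard : ℤ) ≤ d * (d - 1) := by
        have : ((R2 G a₀).ncard : ℤ) ≤ (d * (d-1) : ℕ) := by exact_mod_cast hR2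
        rwa [Nat.cast_mul, Nat.cast_sub hd] at this
      have hr3' : (r : ℤ) ≤ P * (d - 1) := by
        have : (r : ℤ) ≤ (P * (d-1) : ℕ) := by exact_mod_cast hr3
        rwa [Nat.cast_mul, Nat.cast_sub hd] at this
      have hcard' : ((pA S).ncard : ℤ) ≤ 1 + d + q + r := by
        rw [hAR2] at hcard; exact_mod_cast hcard
      have goal' : ((pA S).ncard : ℤ) + 0 + 1 ≤ (Fintype.card V : ℤ) := by
        have hd2' : (2 : ℤ) ≤ d := by exact_mod_cast hd2
        nlinarith [hq, hR2', hr3', hcard', hn,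
          mul_nonneg (by linarith : (0:ℤ) ≤ (d:ℤ) - 1)
            (by linarith [hR2'] : (0:ℤ) ≤ (d:ℤ) * ((d:ℤ) - 1) - ((R2 G a₀).ncard : ℤ)),
          mul_nonneg (by positivity : (0:ℤ) ≤ (q:ℤ)) (by linarith : (0:ℤ) ≤ (d:ℤ) - 2)]
      exact_mod_cast goal'
  · -- B = {v}
    have hvB : vr v ∈ S := by
      have : v ∈ pB S := by rw [hB]; exact rfl
      exact this
    -- A avoids the neighbourhood of v
    have hAv : ∀ a ∈ pA S, ¬ G.Adj a v := by
      intro a ha hav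
      have hdist : M.dist (vl a) none = 2 := dist_l_root hreg hd a
      have hp : (w2 (adj_lr.mpr hav) (adj_r_root (u := v))).length
          = M.dist (vl a) none := by rw [hdist]; simp
      exact gp_excl hS ha hroot _ hp (by simp) (by simp) (by simp) hvB
    -- A is within distance 2 of v
    have hA2 : ∀ a ∈ pA S, a = v ∨ a ∈ R2 G v := by
      intro a ha
      rcases mem_parts G v a with h | h | h | h | h
      · exact Or.inl h
      · exact absurd h.symm (hAv a ha)
      · exact Or.inr h
      all_goals {
        exfalso
        have hne : a ≠ v := h.1
        have hna : ¬ G.Adj v a := h.2.1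
        have hcn : ∀ x, ¬ (G.Adj v x ∧ G.Adj x a) := h.2.2.1
        obtain ⟨w, hw⟩ := nbr_exists hreg hd a
        have hdist : M.dist (vl a) (vr v) = 3 :=
          dist_lr_three hreg hd hne (fun hh => hna hh.symm)
            (fun w' hw' => hcn w' ⟨hw'.2.symm, hw'.1.symm⟩)
        have hp : (w3 (adj_lr.mpr hw) (adj_r_root (u := w)) (adj_root_r (u := v))).length
            = M.dist (vl a) (vr v) := by rw [hdist]; simp
        exact gp_excl hS ha hvB _ hp (by simp) (by simp) (by simp) hroot }
    have hAsub : pA S ⊆ {v} ∪ R2 G v := by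
      intro a ha
      rcases hA2 a ha with h | h
      · exact Or.inl h
      · exact Or.inr h
    have hcard : (pA S).ncard ≤ 1 + d * (d - 1) := by
      calc (pA S).ncard ≤ _ := Set.ncard_le_ncard hAsub (Set.toFinite _)
        _ ≤ ({v} : Set V).ncard + (R2 G v).ncard := Set.ncard_union_le _ _
        _ ≤ 1 + d * (d - 1) := by
            rw [Set.ncard_singleton]
            have := R2_card hreg (G := G) v
            omega
    rw [ncard_root hroot, hB, Set.ncard_singleton]
    have hfin : (d : ℤ) * (d - 1) + 3 ≤ (Fintype.card V : ℤ) := by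
      have hd' : (1:ℤ) ≤ (d:ℤ) := by exact_mod_cast hd
      nlinarith [hn, pow_nonneg (by linarith : (0:ℤ) ≤ (d:ℤ) - 1) 3]
    have : ((pA S).ncard : ℤ) + 1 + 1 ≤ (Fintype.card V : ℤ) := by
      have hc : ((pA S).ncard : ℤ) ≤ 1 + d * (d - 1) := by
        have : ((pA S).ncard : ℤ) ≤ (1 + d * (d-1) : ℕ) := by exact_mod_cast hcard
        rwa [Nat.cast_add, Nat.cast_mul, Nat.cast_sub hd, Nat.cast_one] at this
      linarith
    exact_mod_cast this

end Main
end Mey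


namespace Mey
open SimpleGraph Sum

variable {V : Type*} {G : SimpleGraph V} {d : ℕ}

section Main2
variable [Fintype V]
variable (hreg : IsRegularDeg G d) (hd : 1 ≤ d)
  {S : Set (Option (V ⊕ V))} (hS : IsGPSet (Mycielskian G) S)

include hreg hd hS

/-- For `t` with both copies in `S`, no neighbour of `t` has its original copy in `S`. -/
lemma K_nbr_not_A {t : V} (htA : vl t ∈ S) (htB : vr t ∈ S)
    {w : V} (hw : G.Adj t w) : vl w ∉ S := by
  have hdist : (Mycielskian G).dist (vl t) (vr t) = 2 := dist_lr_self hreg hd t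
  have hp : (w2 (adj_ll.mpr hw) (adj_lr.mpr hw.symm)).length
      = (Mycielskian G).dist (vl t) (vr t) := by rw [hdist]; simp
  exact gp_excl hS htA htB _ hp (by simp) (by simp [hw.ne']) (by simp)

lemma case_noroot (hn : (d : ℤ) ^ 3 - 2 * d ^ 2 + 2 * d + 2 ≤ (Fintype.card V : ℤ))
    (hroot : none ∉ S) : S.ncard ≤ Fintype.card V := by
  set M := Mycielskian G with hM
  classical
  set A := pA S with hA
  set B := pB S with hB
  have hmemA : ∀ v, v ∈ A ↔ vl v ∈ S := fun v => Iff.rfl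
  have hmemB : ∀ v, v ∈ B ↔ vr v ∈ S := fun v => Iff.rfl
  by_cases hbad : ∃ t ∈ A ∩ B, ∃ b, G.Adj t b ∧ b ∈ B
  · -- BAD CASE
    obtain ⟨t, ⟨htA, htB⟩, b, htb, hbB⟩ := hbad
    -- every element of B is within distance 2 of t
    have hBsub : B ⊆ {t} ∪ G.neighborSet t ∪ R2 G t := by
      intro c hc
      rcases mem_parts G t c with h | h | h | h | h
      · exact Or.inl (Or.inl h)
      · exact Or.inl (Or.inr h)
      · exact Or.inr h
      all_goals {
        exfalso
        have hne : c ≠ t := h.1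
        have hna : ¬ G.Adj t c := h.2.1
        have hcn : ∀ x, ¬ (G.Adj t x ∧ G.Adj x c) := h.2.2.1
        have hbc : b ≠ c := by rintro rfl; exact hna htb
        have hdist : M.dist (vl t) (vr c) = 3 :=
          dist_lr_three hreg hd (Ne.symm hne) hna hcn
        have hp : (w3 (adj_lr.mpr htb) (adj_r_root (u := b)) (adj_root_r (u := c))).length
            = M.dist (vl t) (vr c) := by rw [hdist]; simp
        exact gp_excl hS htA hc _ hp (by simp) (by simp) (by simp [hbc]) hbB }
    -- b is the unique neighbour of t in B
    have hBnbr : ∀ c ∈ B, G.Adj t c → c = b := by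
      intro c hc htc
      by_contra hne
      have hdist : M.dist (vr b) (vr c) = 2 := dist_rr (Ne.symm hne)
      have hp : (w2 (adj_rl.mpr htb) (adj_lr.mpr htc)).length
          = M.dist (vr b) (vr c) := by rw [hdist]; simp
      exact gp_excl hS hbB hc _ hp (by simp) (by simp) (by simp) htA
    -- every element of A is within distance 3 of t
    have hAfar : ∀ a ∈ A, a ∉ RFar G t := by
      rintro a ha ⟨hne, hna, hcn, h3p⟩
      obtain ⟨y, hy⟩ := nbr_exists hreg hd a
      have hdist : M.dist (vl t) (vl a) = 4 :=
        dist_ll_four hreg hd (Ne.symm hne) hna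
          (fun w hw => hcn w ⟨hw.1, hw.2⟩)
          (fun p q hpq => h3p p q ⟨hpq.1, hpq.2.1, hpq.2.2⟩)
      have hp : (w4 (adj_lr.mpr htb) (adj_r_root (u := b)) (adj_root_r (u := y))
          (adj_rl.mpr hy)).length = M.dist (vl t) (vl a) := by rw [hdist]; simp
      exact gp_excl hS htA ha _ hp (by simp) (by simp) (by simp) hbB
    -- elements of A ∩ R3 have their R2-neighbours outside A ∪ B
    have hE : ∀ a ∈ A ∩ R3 G t, ∀ y ∈ R2 G t, G.Adj y a → y ∉ A ∪ B := by
      rintro a ⟨haA, haR3⟩ y ⟨hyne, hyna, x, hx1, hx2⟩ hya hyAB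
      obtain ⟨hane, hana, hacn, -⟩ := haR3
      have hdist : M.dist (vl t) (vl a) = 3 :=
        dist_ll_three (Ne.symm hane) hana (fun w hw => hacn w ⟨hw.1, hw.2⟩) hx1 hx2 hya
      rcases hyAB with hyA | hyB
      · have hp : (w3 (adj_ll.mpr hx1) (adj_ll.mpr hx2) (adj_ll.mpr hya)).length
            = M.dist (vl t) (vl a) := by rw [hdist]; simp
        exact gp_excl hS htA haA _ hp (by simp)
          (by simp [hyne]) (by simp [hya.ne]) hyA
      · have hp : (w3 (adj_ll.mpr hx1) (adj_lr.mpr hx2) (adj_rl.mpr hya.symm)).length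
            = M.dist (vl t) (vl a) := by rw [hdist]; simp
        exact gp_excl hS htA haA _ hp (by simp) (by simp) (by simp) hyB
    -- elements of A ∩ R2 are not adjacent to b
    have hAR2b : ∀ a ∈ A ∩ R2 G t, ¬ G.Adj b a := by
      rintro a ⟨haA, haR2⟩ hba
      obtain ⟨hane, hana, -⟩ := haR2
      have hdist : M.dist (vl t) (vl a) = 2 :=
        dist_ll_two (Ne.symm hane) hana htb hba
      have hp : (w2 (adj_lr.mpr htb) (adj_rl.mpr hba.symm)).length
          = M.dist (vl t) (vl a) := by rw [hdist]; simp
      exact gp_excl hS htA haA _ hp (by simp) (by simp) (by simp) hbB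
    -- A avoids the neighbourhood of t
    have hAnbr : ∀ w, G.Adj t w → w ∉ A := fun w hw => K_nbr_not_A hreg hd hS htA htB hw
    -- counting
    have hAsub : A ⊆ {t} ∪ (A ∩ R2 G t) ∪ (A ∩ R3 G t) := by
      intro a ha
      rcases mem_parts G t a with h | h | h | h | h
      · exact Or.inl (Or.inl h)
      · exact absurd ha (hAnbr a h)
      · exact Or.inl (Or.inr ⟨ha, h⟩)
      · exact Or.inr ⟨ha, h⟩
      · exact absurd h (hAfar a ha)
    have hBsub' : B ⊆ {t} ∪ {b} ∪ (B ∩ R2 G t) := by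
      intro c hc
      rcases hBsub hc with (h | h) | h
      · exact Or.inl (Or.inl h)
      · exact Or.inl (Or.inr (hBnbr c hc h))
      · exact Or.inr ⟨hc, h⟩
    have hr3 := AR3_bound hreg (t := t) (A := A) (E := A ∪ B) hE
    -- names
    set mA := (A ∩ R2 G t).ncard with hmA
    set mB := (B ∩ R2 G t).ncard with hmB
    set m := ((A ∪ B) ∩ R2 G t).ncard with hm
    set P := (R2 G t \ (A ∪ B)).ncard with hP
    set j := ((A ∩ B) ∩ R2 G t).ncard with hj
    set r := (A ∩ R3 G t).ncard with hr
    have hAcard : A.ncard ≤ 1 + mA + r := by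
      calc A.ncard ≤ _ := Set.ncard_le_ncard hAsub (Set.toFinite _)
        _ ≤ ({t} ∪ (A ∩ R2 G t)).ncard + r := Set.ncard_union_le _ _
        _ ≤ 1 + mA + r := by
            have := Set.ncard_union_le ({t} : Set V) (A ∩ R2 G t)
            rw [Set.ncard_singleton] at this
            omega
    have hBcard : B.ncard ≤ 2 + mB := by
      calc B.ncard ≤ _ := Set.ncard_le_ncard hBsub' (Set.toFinite _)
        _ ≤ (({t} : Set V) ∪ {b}).ncard + mB := Set.ncard_union_le _ _
        _ ≤ 2 + mB := by
            have := Set.ncard_union_le ({t} : Set V) ({b} : Set V)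
            rw [Set.ncard_singleton, Set.ncard_singleton] at this
            omega
    -- inclusion–exclusion inside R2
    have hmj : mA + mB = m + j := by
      have h1 : (A ∩ R2 G t) ∪ (B ∩ R2 G t) = (A ∪ B) ∩ R2 G t := by
        rw [Set.union_inter_distrib_right]
      have h2 : (A ∩ R2 G t) ∩ (B ∩ R2 G t) = (A ∩ B) ∩ R2 G t := by
        ext z; simp only [Set.mem_inter_iff]; tauto
      have := Set.ncard_union_add_ncard_inter (A ∩ R2 G t) (B ∩ R2 G t)
        (Set.toFinite _) (Set.toFinite _)
      rw [h1, h2] at this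
      omega
    have hjm : j ≤ m :=
      Set.ncard_le_ncard (fun z hz => ⟨Or.inl hz.1.1, hz.2⟩) (Set.toFinite _)
    have hPm : m + P = (R2 G t).ncard := by
      have h1 : R2 G t ∩ (A ∪ B) = (A ∪ B) ∩ R2 G t := Set.inter_comm _ _
      have := Set.ncard_inter_add_ncard_diff_eq_ncard (R2 G t) (A ∪ B) (Set.toFinite _)
      rw [h1] at this
      exact this
    have hR2 := R2_card hreg (G := G) t
    -- assemble
    have htotal : S.ncard = A.ncard + B.ncard := ncard_no_root hroot
    rcases Nat.lt_or_ge d 2 with hd2 | hd2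
    · -- d = 1
      have hd1 : d = 1 := by omega
      subst hd1
      have hR2' : (R2 G t).ncard = 0 := by simpa using hR2
      have hr3' : r ≤ 0 := by simpa using hr3
      omega
    rcases Nat.lt_or_ge d 3 with hd3 | hd3
    · -- d = 2
      have hd2' : d = 2 := by omega
      have hjle : j ≤ 1 := by
        by_contra hj2
        push_neg at hj2
        obtain ⟨k₁, hk₁, k₂, hk₂, hkne⟩ := (Set.one_lt_ncard (Set.toFinite _)).mp hj2
        obtain ⟨⟨hk₁A, hk₁B⟩, hk₁R2⟩ := hk₁
        obtain ⟨⟨hk₂A, hk₂B⟩, hk₂R2⟩ := hk₂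
        have hb₁ : ¬ G.Adj b k₁ := hAR2b k₁ ⟨hk₁A, hk₁R2⟩
        have hb₂ : ¬ G.Adj b k₂ := hAR2b k₂ ⟨hk₂A, hk₂R2⟩
        obtain ⟨h1ne, h1na, x₁, hx₁t, hx₁k⟩ := hk₁R2
        obtain ⟨h2ne, h2na, x₂, hx₂t, hx₂k⟩ := hk₂R2
        have hx₁b : x₁ ≠ b := by rintro rfl; exact hb₁ hx₁k
        have hx₂b : x₂ ≠ b := by rintro rfl; exact hb₂ hx₂k
        by_cases hxx : x₁ = x₂
        · subst hxx
          have h3 : 3 ≤ (G.neighborSet x₁).ncard :=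
            three_le_ncard (Ne.symm h1ne) (Ne.symm h2ne) hkne
              (hx₁t.symm : t ∈ G.neighborSet x₁) (hx₁k : k₁ ∈ G.neighborSet x₁)
              (hx₂k : k₂ ∈ G.neighborSet x₁)
          rw [hreg x₁] at h3
          omega
        · have h3 : 3 ≤ (G.neighborSet t).ncard :=
            three_le_ncard (Ne.symm hx₁b) (Ne.symm hx₂b) hxx
              (htb : b ∈ G.neighborSet t) (hx₁t : x₁ ∈ G.neighborSet t)
              (hx₂t : x₂ ∈ G.neighborSet t)
          rw [hreg t] at h3
          omega
      subst hd2'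
      have hn6 : 6 ≤ Fintype.card V := by
        have h := hn
        norm_num at h
        omega
      omega
    · -- d ≥ 3
      have hq : (m : ℤ) + P = ((R2 G t).ncard : ℤ) := by exact_mod_cast hPm
      have hR2' : ((R2 G t).ncard : ℤ) ≤ d * (d - 1) := by
        have : ((R2 G t).ncard : ℤ) ≤ (d * (d-1) : ℕ) := by exact_mod_cast hR2
        rwa [Nat.cast_mul, Nat.cast_sub hd] at this
      have hr3' : (r : ℤ) ≤ P * (d - 1) := by
        have : (r : ℤ) ≤ (P * (d-1) : ℕ) := by exact_mod_cast hr3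
        rwa [Nat.cast_mul, Nat.cast_sub hd] at this
      have hmj' : (mA : ℤ) + mB = m + j := by exact_mod_cast hmj
      have hjm' : (j : ℤ) ≤ m := by exact_mod_cast hjm
      have hd3' : (3 : ℤ) ≤ d := by exact_mod_cast hd3
      have hAcard' : (A.ncard : ℤ) ≤ 1 + mA + r := by exact_mod_cast hAcard
      have hBcard' : (B.ncard : ℤ) ≤ 2 + mB := by exact_mod_cast hBcard
      have hfin : (A.ncard : ℤ) + B.ncard ≤ (Fintype.card V : ℤ) := by
        nlinarith [hn, hq, hR2', hr3', hmj', hjm', hAcard', hBcard',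
          mul_nonneg (by linarith : (0:ℤ) ≤ (d:ℤ) - 1)
            (by linarith : (0:ℤ) ≤ (d:ℤ) * ((d:ℤ) - 1) - ((R2 G t).ncard : ℤ)),
          mul_nonneg (by positivity : (0:ℤ) ≤ (m:ℤ)) (by linarith : (0:ℤ) ≤ (d:ℤ) - 3),
          mul_nonneg (by positivity : (0:ℤ) ≤ (P:ℤ)) (by linarith : (0:ℤ) ≤ (d:ℤ) - 1)]
      rw [htotal]
      exact_mod_cast hfin
  · -- GOOD CASE
    push_neg at hbad
    set W : Set V := {w | ∃ t ∈ A ∩ B, G.Adj t w} with hW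
    have hWK : (A ∩ B).ncard ≤ W.ncard := by
      apply double_count hreg hd
      rintro t ht w hw
      exact ⟨t, ht, hw⟩
    have hWdisj : Disjoint (A ∪ B) W := by
      rw [Set.disjoint_right]
      rintro w ⟨t, ht, htw⟩ hwAB
      rcases hwAB with hwA | hwB
      · exact K_nbr_not_A hreg hd hS ht.1 ht.2 htw hwA
      · exact hbad t ht w htw hwB
    have hcardV : (A ∪ B).ncard + W.ncard ≤ Fintype.card V := by
      rw [← Set.ncard_union_eq hWdisj (Set.toFinite _) (Set.toFinite _)]
      exact ncard_le_card _
    have hie := Set.ncard_union_add_ncard_inter A B (Set.toFinite _) (Set.toFinite _)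
    have htotal : S.ncard = A.ncard + B.ncard := ncard_no_root hroot
    omega

end Main2
end Mey


namespace Mey
open SimpleGraph Sum

variable {V : Type*} {G : SimpleGraph V} {d : ℕ}

/-- The set of all twin vertices is a general position set of the Mycielskian. -/
lemma twins_gp : IsGPSet (Mycielskian G) (Set.range (vr : V → Option (V ⊕ V))) := by
  intro u hu v hv p hp w hw hws
  obtain ⟨x, rfl⟩ := hu
  obtain ⟨y, rfl⟩ := hv
  obtain ⟨c, rfl⟩ := hw
  by_cases hxy : x = y
  · subst hxy
    rw [SimpleGraph.dist_self] at hp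
    cases p with
    | nil => simp at hws; simp [hws]
    | cons h q => simp at hp
  · rw [dist_rr hxy] at hp
    obtain ⟨z, hz1, hz2, hsup⟩ := walk_len2 p hp
    rw [hsup] at hws
    simp only [List.mem_cons, List.not_mem_nil, or_false] at hws
    rcases hws with h | h | h
    · exact Or.inl h
    · subst h; exact absurd hz1 not_adj_rr
    · exact Or.inr h

lemma ncard_range_vr [Fintype V] :
    (Set.range (vr : V → Option (V ⊕ V))).ncard = Fintype.card V := by
  rw [← Set.image_univ, Set.ncard_image_of_injective _ vr_inj, Set.ncard_univ,
    Nat.card_eq_fintype_card]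

/-- any independent set covers at most half the vertices of a regular graph -/
lemma indep_half [Fintype V] (hreg : IsRegularDeg G d) (hd : 1 ≤ d) {S : Set V}
    (hind : ∀ u ∈ S, ∀ v ∈ S, ¬ G.Adj u v) : 2 * S.ncard ≤ Fintype.card V := by
  classical
  set W : Set V := {w | ∃ t ∈ S, G.Adj t w} with hW
  have hWS : S.ncard ≤ W.ncard := by
    apply double_count hreg hd
    rintro t ht w hw
    exact ⟨t, ht, hw⟩
  have hdisj : Disjoint S W := by
    rw [Set.disjoint_right]
    rintro w ⟨t, ht, htw⟩ hwS
    exact hind t ht w hwS htw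
  have hcardV : S.ncard + W.ncard ≤ Fintype.card V := by
    rw [← Set.ncard_union_eq hdisj (Set.toFinite _) (Set.toFinite _)]
    exact ncard_le_card _
  omega

end Mey


/-- Any non-complete `d`-regular graph (`d ≥ 1`) of order
`n ≥ d³ - 2d² + 2d + 2` is meagre, i.e. `gp(μ(G)) = max {n, 2 α_gp(G)}`. -/
theorem regular_large_order_meagre [Fintype V] (G : SimpleGraph V) {d : ℕ}
    (hd : 1 ≤ d) (hne : G ≠ ⊤) (hreg : IsRegularDeg G d)
    (hn : (d : ℤ) ^ 3 - 2 * d ^ 2 + 2 * d + 2 ≤ (Fintype.card V : ℤ)) :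
    gpNumber (Mycielskian G) = max (Fintype.card V) (2 * alphaGpNumber G) := by
  classical
  have hmem : Fintype.card V ∈
      {k | ∃ S : Set (Option (V ⊕ V)), IsGPSet (Mycielskian G) S ∧ S.ncard = k} :=
    ⟨Set.range Mey.vr, Mey.twins_gp, Mey.ncard_range_vr⟩
  have hub : ∀ k ∈ {k | ∃ S : Set (Option (V ⊕ V)), IsGPSet (Mycielskian G) S ∧ S.ncard = k},
      k ≤ Fintype.card V := by
    rintro k ⟨S, hS, rfl⟩
    by_cases hroot : none ∈ S
    · exact Mey.case_root hreg hd hS hn hroot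
    · exact Mey.case_noroot hreg hd hS hn hroot
  have hgp : gpNumber (Mycielskian G) = Fintype.card V := by
    apply le_antisymm
    · exact csSup_le ⟨_, hmem⟩ hub
    · exact le_csSup ⟨Fintype.card V, hub⟩ hmem
  have halpha : 2 * alphaGpNumber G ≤ Fintype.card V := by
    have hub2 : ∀ k ∈ {k | ∃ S : Set V, (∀ u ∈ S, ∀ v ∈ S, ¬ G.Adj u v) ∧
        IsGPSet G S ∧ S.ncard = k}, k ≤ Fintype.card V / 2 := by
      rintro k ⟨S, hind, -, rfl⟩
      have := Mey.indep_half hreg hd hind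
      omega
    have hne0 : {k | ∃ S : Set V, (∀ u ∈ S, ∀ v ∈ S, ¬ G.Adj u v) ∧
        IsGPSet G S ∧ S.ncard = k}.Nonempty := by
      refine ⟨0, ∅, by simp, ?_, by simp⟩
      intro u hu
      exact absurd hu (Set.notMem_empty u)
    have : alphaGpNumber G ≤ Fintype.card V / 2 := csSup_le hne0 hub2
    omega
  rw [hgp, Nat.max_eq_left halpha]
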